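/- Let c > 0, m > 0, σ > 0, α > 0 and p < 0 be real numbers with m > −p·σ. Consider the feasible set F = { e ∈ ℝ² : α ≤ m·(e₁ + e₂) + p·σ·√(e₁² + e₂²) }. Then: (i) the symmetric point e' = (t, t) with t = α / (2(m + pσ/√2)) belongs to F and has ℓ1 cost c(|e'₁| + |e'₂|) = cα/(m + pσ/√2); (ii) every e ∈ F with e₁ = 0 or e₂ = 0 satisfies c(|e₁| + |e₂|) ≥ cα/(m + pσ) > cα/(m + pσ/√2). Consequently, no minimizer of the weighted ℓ1 cost over F is supported on a single coordinate, i.e., under partially incomplete information the optimal ℓ1-cost effort profile can require investing in more than one feature. -/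

import Mathlib

/-- Two identical features with mean contribution `m`, variance
`σ²`, cost multiplier `c`, shortfall `α > 0` and `p < 0` with `m > −pσ`.
(i) The symmetric point `(t, t)` with `t = α/(2(m + pσ/√2))` is feasible with
ℓ1 cost `cα/(m + pσ/√2)`; (ii) any feasible point supported on one coordinate
has cost at least `cα/(m + pσ) > cα/(m + pσ/√2)`; consequently no minimizer of
the ℓ1 cost over the feasible set is supported on a single coordinate. -/
theorem stmt_13 (c m σ α p : ℝ) (hc : 0 < c) (hm : 0 < m) (hσ : 0 < σ)
    (hα : 0 < α) (hp : p < 0) (hfeas : -p * σ < m) :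
    let F : Set (Fin 2 → ℝ) :=
      {e | α ≤ m * (e 0 + e 1) + p * σ * Real.sqrt (e 0 ^ 2 + e 1 ^ 2)}
    let t : ℝ := α / (2 * (m + p * σ / Real.sqrt 2))
    ((fun _ : Fin 2 => t) ∈ F ∧
      c * (|t| + |t|) = c * α / (m + p * σ / Real.sqrt 2)) ∧
    (∀ e ∈ F, (e 0 = 0 ∨ e 1 = 0) →
      c * α / (m + p * σ) ≤ c * (|e 0| + |e 1|)) ∧
    c * α / (m + p * σ / Real.sqrt 2) < c * α / (m + p * σ) ∧
    (∀ e ∈ F, (∀ e' ∈ F, c * (|e 0| + |e 1|) ≤ c * (|e' 0| + |e' 1|)) →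
      e 0 ≠ 0 ∧ e 1 ≠ 0) := by
  intro F t
  have hs2 : (0:ℝ) < Real.sqrt 2 := Real.sqrt_pos.2 (by norm_num)
  have hs2sq : Real.sqrt 2 * Real.sqrt 2 = 2 := Real.mul_self_sqrt (by norm_num)
  have hs21 : 1 < Real.sqrt 2 := by nlinarith
  have hpσ : p * σ < 0 := mul_neg_of_neg_of_pos hp hσ
  have h1 : 0 < m + p * σ := by linarith
  have hkey : p * σ < p * σ / Real.sqrt 2 := (lt_div_iff₀ hs2).2 (by nlinarith)
  have h2 : 0 < m + p * σ / Real.sqrt 2 := by linarith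
  have ht : 0 < t := div_pos hα (by linarith)
  have hsqt : Real.sqrt (t ^ 2 + t ^ 2) = Real.sqrt 2 * t := by
    rw [show t ^ 2 + t ^ 2 = 2 * t ^ 2 by ring, Real.sqrt_mul (by norm_num),
      Real.sqrt_sq ht.le]
  have hdd : 2 * m + p * σ * Real.sqrt 2 = 2 * (m + p * σ / Real.sqrt 2) := by
    field_simp
    nlinarith [hs2sq]
  have hfeas1 : (fun _ : Fin 2 => t) ∈ F := by
    show α ≤ m * (t + t) + p * σ * Real.sqrt (t ^ 2 + t ^ 2)
    rw [hsqt]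
    have : m * (t + t) + p * σ * (Real.sqrt 2 * t)
        = t * (2 * (m + p * σ / Real.sqrt 2)) := by
      rw [← hdd]; ring
    rw [this]
    rw [div_mul_cancel₀ α (by positivity : (2 * (m + p * σ / Real.sqrt 2)) ≠ 0)]
  have hcost : c * (|t| + |t|) = c * α / (m + p * σ / Real.sqrt 2) := by
    rw [abs_of_pos ht]
    have htt : t + t = α / (m + p * σ / Real.sqrt 2) := by
      show α / (2 * (m + p * σ / Real.sqrt 2)) + α / (2 * (m + p * σ / Real.sqrt 2))
        = α / (m + p * σ / Real.sqrt 2)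
      rw [← add_div, eq_div_iff h2.ne', div_mul_eq_mul_div,
        div_eq_iff (by positivity : (2 * (m + p * σ / Real.sqrt 2)) ≠ 0)]
      ring
    rw [htt]; ring
  have part2 : ∀ e ∈ F, (e 0 = 0 ∨ e 1 = 0) →
      c * α / (m + p * σ) ≤ c * (|e 0| + |e 1|) := by
    intro e he h0
    have key : ∀ x : ℝ, α ≤ m * x + p * σ * |x| →
        c * α / (m + p * σ) ≤ c * |x| := by
      intro x hx
      have hb : α ≤ |x| * (m + p * σ) := by
        nlinarith [le_abs_self x]
      rw [div_le_iff₀ h1]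
      nlinarith
    rcases h0 with h0 | h0
    · have he' : α ≤ m * (e 1) + p * σ * |e 1| := by
        have := he
        simp only [F, Set.mem_setOf_eq, h0] at this
        rwa [show (0:ℝ) ^ 2 + e 1 ^ 2 = e 1 ^ 2 by ring, Real.sqrt_sq_eq_abs,
          zero_add] at this
      have := key _ he'
      simp [h0]
      simpa using this
    · have he' : α ≤ m * (e 0) + p * σ * |e 0| := by
        have := he
        simp only [F, Set.mem_setOf_eq, h0] at this
        rwa [show e 0 ^ 2 + (0:ℝ) ^ 2 = e 0 ^ 2 by ring, Real.sqrt_sq_eq_abs,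
          add_zero] at this
      have := key _ he'
      simp [h0]
      simpa using this
  have part3 : c * α / (m + p * σ / Real.sqrt 2) < c * α / (m + p * σ) :=
    div_lt_div_of_pos_left (mul_pos hc hα) h1 (by linarith)
  refine ⟨⟨hfeas1, hcost⟩, part2, part3, ?_⟩
  intro e heF hmin
  have hle := hmin _ hfeas1
  rw [hcost] at hle
  constructor
  · intro h0
    have := part2 e heF (Or.inl h0)
    linarith
  · intro h1'
    have := part2 e heF (Or.inr h1')
    linarith
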